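/- arXiv:2007.16087 — 3 statements merged into one kernel-verified Lean document; each statement's English description precedes it below -/
import Mathlib

section
/- With the notation of the previous statement (harmonic noise memory kernel with parameters γ, ν fixed and α > 2), for every fixed t > 0 the memory kernel γ_α(t) converges to (γ/ν²) e^{−t/ν²} as α → ∞. -/
open Filter Real

/-- The harmonic-noise memory kernel (with `α > 2`) converges pointwise, as
`α → ∞`, to the Ornstein–Uhlenbeck memory kernel `(γ/ν²) e^{-t/ν²}`. -/
theorem harmonic_kernel_limit (γ ν t : ℝ) (hγ : 0 < γ) (hν : 0 < ν) (ht : 0 < t) :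
    Filter.Tendsto
      (fun α : ℝ =>
        γ / ν ^ 2 * Real.exp (-(α ^ 2 * t) / (2 * ν ^ 2)) *
          (α / Real.sqrt (α ^ 2 - 4) *
              Real.sinh (Real.sqrt (α ^ 2 - 4) / 2 * (α * t / ν ^ 2)) +
            Real.cosh (Real.sqrt (α ^ 2 - 4) / 2 * (α * t / ν ^ 2))))
      Filter.atTop (nhds (γ / ν ^ 2 * Real.exp (-t / ν ^ 2))) := by
  have hν2 : (0:ℝ) < ν ^ 2 := by positivity
  set s : ℝ → ℝ := fun α => Real.sqrt (α ^ 2 - 4) with hs_def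
  -- α² - 4 → ∞
  have hquad : Tendsto (fun α : ℝ => α ^ 2 - 4) atTop atTop := by
    have hp : Tendsto (fun α : ℝ => α ^ 2) atTop atTop := tendsto_pow_atTop two_ne_zero
    simpa [sub_eq_add_neg] using tendsto_atTop_add_const_right atTop (-4) hp
  -- α / s α → 1
  have hratio : Tendsto (fun α : ℝ => α / s α) atTop (nhds 1) := by
    have h0 : Tendsto (fun α : ℝ => 4 / (α ^ 2 - 4)) atTop (nhds 0) :=
      Tendsto.div_atTop tendsto_const_nhds hquad
    have h1 : Tendsto (fun α : ℝ => 1 + 4 / (α ^ 2 - 4)) atTop (nhds 1) := by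
      simpa using tendsto_const_nhds.add h0
    have h2 : Tendsto (fun α : ℝ => Real.sqrt (1 + 4 / (α ^ 2 - 4))) atTop (nhds 1) := by
      have := (Real.continuous_sqrt.tendsto 1).comp h1
      simpa [Function.comp_def] using this
    refine h2.congr' ?_
    filter_upwards [eventually_gt_atTop (2:ℝ)] with α hα
    have hαpos : 0 < α := by linarith
    have hd : 0 < α ^ 2 - 4 := by nlinarith
    have : 1 + 4 / (α ^ 2 - 4) = α ^ 2 / (α ^ 2 - 4) := by field_simp; ring
    rw [this, Real.sqrt_div (by positivity), Real.sqrt_sq hαpos.le]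
  -- s α / α → 1
  have hratio' : Tendsto (fun α : ℝ => s α / α) atTop (nhds 1) := by
    have := hratio.inv₀ one_ne_zero
    simpa [inv_div] using this
  -- first exponent → -t/ν²
  have hA : Tendsto (fun α : ℝ => Real.exp ((s α * α - α ^ 2) * t / (2 * ν ^ 2)))
      atTop (nhds (Real.exp (-t / ν ^ 2))) := by
    have h2 : Tendsto (fun α : ℝ => -4 / (1 + s α / α)) atTop (nhds (-2)) := by
      have hden : Tendsto (fun α : ℝ => 1 + s α / α) atTop (nhds 2) := by
        have h := hratio'.const_add (1:ℝ)
        norm_num at h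
        exact h
      have h := (tendsto_const_nhds (x := (-4:ℝ)) (f := atTop)).div hden (by norm_num)
      norm_num at h
      exact h
    have h3 : Tendsto (fun α : ℝ => -4 / (1 + s α / α) * (t / (2 * ν ^ 2)))
        atTop (nhds (-t / ν ^ 2)) := by
      have := h2.mul_const (t / (2 * ν ^ 2))
      have hval : (-2 : ℝ) * (t / (2 * ν ^ 2)) = -t / ν ^ 2 := by
        field_simp
      rwa [hval] at this
    have h4 : Tendsto (fun α : ℝ => (s α * α - α ^ 2) * t / (2 * ν ^ 2))
        atTop (nhds (-t / ν ^ 2)) := by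
      refine h3.congr' ?_
      filter_upwards [eventually_gt_atTop (2:ℝ)] with α hα
      have hαpos : 0 < α := by linarith
      have hd : 0 < α ^ 2 - 4 := by nlinarith
      have hs0 : 0 < s α := Real.sqrt_pos.mpr hd
      have hs2 : s α ^ 2 = α ^ 2 - 4 := Real.sq_sqrt hd.le
      have hkey : s α * α - α ^ 2 = -4 / (1 + s α / α) := by
        have hden : 1 + s α / α = (α + s α) / α := by field_simp
        rw [hden, div_div_eq_mul_div, eq_div_iff (by positivity)]
        linear_combination α * hs2
      rw [← hkey]
      ring
    exact (Real.continuous_exp.tendsto _).comp h4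
  -- second exponential → 0
  have hB : Tendsto (fun α : ℝ => Real.exp ((-(s α * α) - α ^ 2) * t / (2 * ν ^ 2)))
      atTop (nhds 0) := by
    apply Real.tendsto_exp_atBot.comp
    have htail : Tendsto (fun α : ℝ => -(α ^ 2) * t / (2 * ν ^ 2)) atTop atBot := by
      have hp : Tendsto (fun α : ℝ => α ^ 2) atTop atTop := tendsto_pow_atTop two_ne_zero
      have h := hp.atTop_mul_const (div_pos ht (by positivity : (0:ℝ) < 2 * ν ^ 2))
      have := tendsto_neg_atTop_atBot.comp h
      refine this.congr fun α => ?_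
      simp only [Function.comp_apply]
      ring
    refine tendsto_atBot_mono' atTop ?_ htail
    filter_upwards [eventually_gt_atTop (2:ℝ)] with α hα
    have hαpos : 0 < α := by linarith
    have hs0 : 0 ≤ s α := Real.sqrt_nonneg _
    have hfac : -(s α * α) - α ^ 2 ≤ -(α ^ 2) := by nlinarith
    have h2ν : (0:ℝ) < 2 * ν ^ 2 := by positivity
    gcongr
  -- coefficients
  have hC1 : Tendsto (fun α : ℝ => (α / s α + 1) / 2) atTop (nhds 1) := by
    have := (hratio.add_const 1).div_const 2
    norm_num at this
    exact this
  have hC2 : Tendsto (fun α : ℝ => (1 - α / s α) / 2) atTop (nhds 0) := by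
    have h := (hratio.const_sub (1:ℝ)).div_const 2
    norm_num at h
    exact h
  -- the nice form tends to the limit
  have hnice : Tendsto (fun α : ℝ =>
      γ / ν ^ 2 * ((α / s α + 1) / 2 * Real.exp ((s α * α - α ^ 2) * t / (2 * ν ^ 2)) +
        (1 - α / s α) / 2 * Real.exp ((-(s α * α) - α ^ 2) * t / (2 * ν ^ 2))))
      atTop (nhds (γ / ν ^ 2 * Real.exp (-t / ν ^ 2))) := by
    have := ((hC1.mul hA).add (hC2.mul hB)).const_mul (γ / ν ^ 2)
    simpa using this
  -- conclude by eventual equality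
  refine hnice.congr' ?_
  filter_upwards [eventually_gt_atTop (2:ℝ)] with α hα
  have hαpos : 0 < α := by linarith
  have hd : 0 < α ^ 2 - 4 := by nlinarith
  have hs0 : 0 < s α := Real.sqrt_pos.mpr hd
  have e1 : (s α * α - α ^ 2) * t / (2 * ν ^ 2)
      = s α / 2 * (α * t / ν ^ 2) + -(α ^ 2 * t) / (2 * ν ^ 2) := by
    field_simp
    ring
  have e2 : (-(s α * α) - α ^ 2) * t / (2 * ν ^ 2)
      = -(s α / 2 * (α * t / ν ^ 2)) + -(α ^ 2 * t) / (2 * ν ^ 2) := by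
    field_simp
    ring
  rw [e1, e2, Real.exp_add, Real.exp_add, Real.sinh_eq, Real.cosh_eq, Real.exp_neg]
  have hE : Real.exp (s α / 2 * (α * t / ν ^ 2)) ≠ 0 := Real.exp_ne_zero _
  rw [show Real.sqrt (α ^ 2 - 4) = s α from rfl]
  field_simp
  ring
end

section
/- Let X ∈ ℝ^{d×d} have nonpositive off-diagonal entries. Then λ⁺_min(X) := min_{v≠0, v≥0} vᵀXv/vᵀv equals the smallest eigenvalue of the symmetrized matrix (X + Xᵀ)/2. -/
open Matrix Pointwise

section Aux

variable {d : ℕ}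

/-- Quadratic form of `X` equals that of its symmetrization. -/
lemma quad_symm (X : Matrix (Fin d) (Fin d) ℝ) (v : Fin d → ℝ) :
    v ⬝ᵥ ((1 / 2 : ℝ) • (X + Xᵀ)).mulVec v = v ⬝ᵥ X.mulVec v := by
  have h1 : v ⬝ᵥ (Xᵀ).mulVec v = v ⬝ᵥ X.mulVec v := by
    rw [Matrix.mulVec_transpose, dotProduct_comm, ← Matrix.dotProduct_mulVec]
  rw [Matrix.smul_mulVec, dotProduct_smul, Matrix.add_mulVec,
    dotProduct_add, h1]
  ring_nf

/-- Rayleigh lower bound: the quadratic form is at least `μ * ‖v‖²` where `μ` is the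
smallest eigenvalue. -/
lemma quad_lower (hd : 0 < d) (S : Matrix (Fin d) (Fin d) ℝ) (hS : S.IsHermitian)
    (v : Fin d → ℝ) : (⨅ i, hS.eigenvalues i) * (v ⬝ᵥ v) ≤ v ⬝ᵥ S.mulVec v := by
  haveI : Nonempty (Fin d) := ⟨⟨0, hd⟩⟩
  set μ := ⨅ i, hS.eigenvalues i with hμ
  have hT : (S - μ • (1 : Matrix (Fin d) (Fin d) ℝ)).IsHermitian := by
    refine hS.sub ?_
    simp [Matrix.IsHermitian, Matrix.conjTranspose_smul]
  have hspec : spectrum ℝ (S - μ • (1 : Matrix (Fin d) (Fin d) ℝ))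
      = spectrum ℝ S - ({μ} : Set ℝ) := by
    rw [spectrum.sub_singleton_eq]
    congr 1
    rw [Algebra.algebraMap_eq_smul_one]
  have heigT : ∀ i, 0 ≤ hT.eigenvalues i := by
    intro i
    have hmem : hT.eigenvalues i ∈ spectrum ℝ (S - μ • (1 : Matrix (Fin d) (Fin d) ℝ)) := by
      rw [hT.spectrum_real_eq_range_eigenvalues]
      exact ⟨i, rfl⟩
    rw [hspec] at hmem
    obtain ⟨a, ha, b, hb, hab⟩ := hmem
    rw [Set.mem_singleton_iff] at hb
    subst hb
    rw [hS.spectrum_real_eq_range_eigenvalues] at ha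
    obtain ⟨j, rfl⟩ := ha
    rw [← hab]
    have : μ ≤ hS.eigenvalues j := ciInf_le (Finite.bddBelow_range _) j
    dsimp only
    linarith
  have hpsd := hT.posSemidef_iff_eigenvalues_nonneg.mpr heigT
  have := hpsd.dotProduct_mulVec_nonneg v
  simp only [RCLike.re_to_real, star_trivial] at this
  rw [Matrix.sub_mulVec, dotProduct_sub, Matrix.smul_mulVec,
    Matrix.one_mulVec, dotProduct_smul, smul_eq_mul, sub_nonneg] at this
  exact this

end Aux

/-- For a real matrix `X` with nonpositive off-diagonal entries, the minimum of
the Rayleigh quotient over nonzero nonnegative vectors equals the smallest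
eigenvalue of the symmetrized matrix `(X + Xᵀ)/2`. -/
theorem lambda_min_plus_eq_min_eigenvalue {d : ℕ} (hd : 0 < d)
    (X : Matrix (Fin d) (Fin d) ℝ) (hoff : ∀ i j, i ≠ j → X i j ≤ 0)
    (hS : ((1 / 2 : ℝ) • (X + Xᵀ)).IsHermitian) :
    sInf {r : ℝ | ∃ v : Fin d → ℝ, v ≠ 0 ∧ (∀ i, 0 ≤ v i) ∧
        r = v ⬝ᵥ X.mulVec v / (v ⬝ᵥ v)} = ⨅ i, hS.eigenvalues i := by
  haveI : Nonempty (Fin d) := ⟨⟨0, hd⟩⟩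
  set S := (1 / 2 : ℝ) • (X + Xᵀ) with hSdef
  set μ := ⨅ i, hS.eigenvalues i with hμ
  -- off-diagonal entries of S are nonpositive
  have hSoff : ∀ i j, i ≠ j → S i j ≤ 0 := by
    intro i j hij
    have h1 := hoff i j hij
    have h2 := hoff j i (Ne.symm hij)
    simp only [hSdef, Matrix.smul_apply, Matrix.add_apply, Matrix.transpose_apply,
      smul_eq_mul]
    linarith
  -- lower bound for each element of the set
  have hlb : ∀ r ∈ {r : ℝ | ∃ v : Fin d → ℝ, v ≠ 0 ∧ (∀ i, 0 ≤ v i) ∧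
      r = v ⬝ᵥ X.mulVec v / (v ⬝ᵥ v)}, μ ≤ r := by
    rintro r ⟨v, hv0, _, rfl⟩
    have hvv : 0 < v ⬝ᵥ v := by
      rcases Function.ne_iff.mp hv0 with ⟨i, hi⟩
      exact Finset.sum_pos' (fun j _ => mul_self_nonneg _)
        ⟨i, Finset.mem_univ i, mul_self_pos.mpr hi⟩
    have h := quad_lower hd S hS v
    rw [quad_symm] at h
    rw [le_div_iff₀ hvv]
    linarith
  -- μ is attained
  have hmem : μ ∈ {r : ℝ | ∃ v : Fin d → ℝ, v ≠ 0 ∧ (∀ i, 0 ≤ v i) ∧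
      r = v ⬝ᵥ X.mulVec v / (v ⬝ᵥ v)} := by
    obtain ⟨i₀, hi₀⟩ := exists_eq_ciInf_of_finite (f := hS.eigenvalues)
    set w : Fin d → ℝ := ⇑(hS.eigenvectorBasis i₀) with hw
    have hweig : S.mulVec w = μ • w := by
      rw [hw]
      rw [show (μ • ⇑(hS.eigenvectorBasis i₀)) = hS.eigenvalues i₀ • ⇑(hS.eigenvectorBasis i₀) by
        rw [hμ, ← hi₀]]
      exact hS.mulVec_eigenvectorBasis i₀
    have hw0 : w ≠ 0 := by
      intro h
      have := hS.eigenvectorBasis.orthonormal.1 i₀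
      rw [hw] at h
      rw [show (hS.eigenvectorBasis i₀ : EuclideanSpace ℝ (Fin d)) = 0 from WithLp.ofLp_injective 2 (funext fun i =>
        congrFun h i)] at this
      simp at this
    -- w quadratic form equals μ * (w ⬝ᵥ w)
    have hwq : w ⬝ᵥ S.mulVec w = μ * (w ⬝ᵥ w) := by
      rw [hweig, dotProduct_smul, smul_eq_mul]
    set u : Fin d → ℝ := fun i => |w i| with hu
    have hu0 : u ≠ 0 := by
      intro h
      apply hw0
      funext i
      have := congrFun h i
      simp [hu] at this
      simpa using this
    have hunn : ∀ i, 0 ≤ u i := fun i => abs_nonneg _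
    have huu : u ⬝ᵥ u = w ⬝ᵥ w := by
      simp only [dotProduct, hu]
      exact Finset.sum_congr rfl fun i _ => (abs_mul_abs_self _)
    have huupos : 0 < u ⬝ᵥ u := by
      rcases Function.ne_iff.mp hw0 with ⟨i, hi⟩
      rw [huu]
      have hterm : ∀ j ∈ Finset.univ, 0 ≤ w j * w j := fun j _ => mul_self_nonneg _
      exact Finset.sum_pos' hterm ⟨i, Finset.mem_univ i, mul_self_pos.mpr hi⟩
    -- key comparison: u ⬝ᵥ S u ≤ w ⬝ᵥ S w
    have hcmp : u ⬝ᵥ S.mulVec u ≤ w ⬝ᵥ S.mulVec w := by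
      simp only [dotProduct, Matrix.mulVec, dotProduct, Finset.mul_sum]
      rw [← Finset.sum_product', ← Finset.sum_product']
      apply Finset.sum_le_sum
      rintro ⟨i, j⟩ _
      by_cases hij : i = j
      · subst hij
        simp only [hu]
        exact le_of_eq (by rw [mul_left_comm, abs_mul_abs_self, mul_left_comm])
      · have hSij := hSoff i j hij
        have habs : w i * w j ≤ u i * u j := by
          rw [hu]
          calc w i * w j ≤ |w i * w j| := le_abs_self _
          _ = |w i| * |w j| := abs_mul _ _
        nlinarith [mul_le_mul_of_nonpos_left habs hSij]
    have hule : u ⬝ᵥ S.mulVec u / (u ⬝ᵥ u) ≤ μ := by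
      rw [div_le_iff₀ huupos, huu]
      rw [hwq] at hcmp
      linarith
    have huge : μ ≤ u ⬝ᵥ S.mulVec u / (u ⬝ᵥ u) := by
      rw [le_div_iff₀ huupos]
      have := quad_lower hd S hS u
      linarith
    have : u ⬝ᵥ S.mulVec u / (u ⬝ᵥ u) = μ := le_antisymm hule huge
    refine ⟨u, hu0, hunn, ?_⟩
    rw [← this, quad_symm]
  exact le_antisymm (csInf_le ⟨μ, hlb⟩ hmem) (le_csInf ⟨μ, hmem⟩ hlb)
end

section
/- Fix k > 0 and ν > 0. For the cubic polynomial p(x) = x³ + ν⁻²x² + (γν⁻² + k)x + kν⁻² viewed as a function of x with parameter γ, the real root x₁(γ) satisfies x₁(γ) = −ν⁻² + O(γ) and the two complex conjugate roots x_{2,3}(γ) satisfy x₂(γ) = i√k − γ(1 − i√k ν²)/(2(1 + kν⁴)) + O(γ²) as γ → 0. -/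
set_option maxHeartbeats 1000000

open Asymptotics

lemma exists_root_aux (k a γ : ℝ) (hk : 0 < k) (ha : 0 < a) (hγ : 0 < γ) :
    ∃ x, x ∈ Set.Icc (-a) 0 ∧ x^3 + a*x^2 + (γ*a+k)*x + k*a = 0 := by
  have hcont : ContinuousOn (fun x : ℝ => x^3 + a*x^2 + (γ*a+k)*x + k*a) (Set.Icc (-a) 0) := by
    fun_prop
  have h0 : (0:ℝ) ∈ Set.Icc ((-a)^3 + a*(-a)^2 + (γ*a+k)*(-a) + k*a)
      ((0:ℝ)^3 + a*0^2 + (γ*a+k)*0 + k*a) := by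
    constructor <;> nlinarith
  obtain ⟨x, hx, hxe⟩ := intermediate_value_Icc (by linarith : -(a:ℝ) ≤ 0) hcont h0
  exact ⟨x, hx, hxe⟩

lemma root_e_bounds (k a γ x : ℝ) (hk : 0 < k) (ha : 0 < a) (hγ : 0 < γ)
    (hmem : x ∈ Set.Icc (-a) 0)
    (hroot : x^3 + a*x^2 + (γ*a+k)*x + k*a = 0) :
    0 ≤ x + a ∧ x + a ≤ γ*a^2/k ∧ |x + a - γ*a^2/(a^2+k)| ≤ γ^2*a^3/k^2 := by
  obtain ⟨hxl, hxu⟩ := hmem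
  set e := x + a with he_def
  have he0 : 0 ≤ e := by rw [he_def]; linarith
  have hae : 0 ≤ a - e := by rw [he_def]; ring_nf; linarith
  have hid : e * ((a - e)^2 + k) = γ * a * (a - e) := by
    rw [he_def]; linear_combination hroot
  have hq : k ≤ (a - e)^2 + k := by nlinarith
  have hγa : 0 ≤ γ*a := by positivity
  have hgae : 0 ≤ γ*a*e := by positivity
  have he2 : e ≤ γ*a^2/k := by
    rw [le_div_iff₀ hk]
    have p1 : e*k ≤ e*((a-e)^2+k) := mul_le_mul_of_nonneg_left hq he0
    have p2 : γ*a*(a-e) ≤ γ*a^2 := by nlinarith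
    linarith [hid]
  have hD : 0 < a^2 + k := by positivity
  have key : (e*(a^2+k) - γ*a^2) * ((a-e)^2+k) = γ*a*e*(a*(a-e)-k) := by
    linear_combination (a^2+k)*hid
  have hid2 : (e - γ*a^2/(a^2+k)) * (((a-e)^2+k)*(a^2+k)) = γ*a*e*(a*(a-e)-k) := by
    rw [← key]; field_simp
  set δ := e - γ*a^2/(a^2+k) with hδ_def
  have habs : |δ| ≤ γ^2*a^3/k^2 := by
    have h1 : |δ| * (((a-e)^2+k)*(a^2+k)) = |γ*a*e*(a*(a-e)-k)| := by
      rw [← abs_of_pos (by positivity : (0:ℝ) < ((a-e)^2+k)*(a^2+k)), ← abs_mul, hid2]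
    have hinner : |a*(a-e)-k| ≤ a^2 + k := by
      rw [abs_le]; constructor <;> nlinarith
    have h2 : |γ*a*e*(a*(a-e)-k)| ≤ γ*a*e*(a^2+k) := by
      rw [abs_mul, abs_of_nonneg hgae]
      exact mul_le_mul_of_nonneg_left hinner hgae
    have h3 : |δ| * (k*(a^2+k)) ≤ γ*a*e*(a^2+k) := by
      have : |δ| * (k*(a^2+k)) ≤ |δ| * (((a-e)^2+k)*(a^2+k)) :=
        mul_le_mul_of_nonneg_left (mul_le_mul_of_nonneg_right hq hD.le) (abs_nonneg _)
      linarith [h1 ▸ this, h2]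
    have h3' : (|δ| * k) * (a^2+k) ≤ (γ*a*e) * (a^2+k) := by
      calc (|δ| * k) * (a^2+k) = |δ| * (k*(a^2+k)) := by ring
        _ ≤ γ*a*e*(a^2+k) := h3
    have h4 : |δ| * k ≤ γ*a*e := le_of_mul_le_mul_right h3' hD
    have h5 : γ*a*e ≤ γ*a*(γ*a^2/k) := mul_le_mul_of_nonneg_left he2 hγa
    have h6 : (|δ| * k) * k ≤ (γ*a*(γ*a^2/k)) * k :=
      mul_le_mul_of_nonneg_right (h4.trans h5) hk.le
    have h7 : (γ*a*(γ*a^2/k)) * k = γ^2*a^3 := by field_simp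
    rw [le_div_iff₀ (by positivity : (0:ℝ) < k^2)]
    calc |δ| * k^2 = (|δ| * k) * k := by ring
      _ ≤ (γ*a*(γ*a^2/k)) * k := h6
      _ = γ^2*a^3 := h7
  exact ⟨he0, he2, habs⟩

lemma s_bound (k a γ e : ℝ) (hk : 0 < k) (ha : 0 < a) (hγ : 0 < γ)
    (he0 : 0 ≤ e) (he2 : e ≤ γ*a^2/k)
    (hδ : |e - γ*a^2/(a^2+k)| ≤ γ^2*a^3/k^2)
    (hγ₀ : γ ≤ k^2/(2*a^3)) :
    k/2 ≤ k + γ*a - a*e + (3/4)*e^2 ∧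
    |Real.sqrt (k + γ*a - a*e + (3/4)*e^2)
        - (Real.sqrt k + γ*(Real.sqrt k)*a/(2*(a^2+k)))|
      ≤ γ^2 * ((2*a^4/k^2 + a^2/(4*k))/Real.sqrt k) := by
  have hD : 0 < a^2 + k := by positivity
  set R := k + γ*a - a*e + (3/4)*e^2 with hR_def
  have hae : a*e ≤ γ*a^3/k := by
    have := mul_le_mul_of_nonneg_left he2 ha.le
    calc a*e ≤ a*(γ*a^2/k) := this
      _ = γ*a^3/k := by ring
  have hka : γ*a^3/k ≤ k/2 := by
    rw [div_le_div_iff₀ hk (by norm_num : (0:ℝ) < 2)]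
    rw [le_div_iff₀ (by positivity : (0:ℝ) < 2*a^3)] at hγ₀
    nlinarith
  have hR : k/2 ≤ R := by
    have h1 : 0 ≤ γ*a := by positivity
    have h2 : 0 ≤ (3/4)*e^2 := by positivity
    rw [hR_def]; linarith
  have hR0 : 0 ≤ R := le_trans (by positivity : (0:ℝ) ≤ k/2) hR
  set s := Real.sqrt R with hs_def
  set t := Real.sqrt k + γ*(Real.sqrt k)*a/(2*(a^2+k)) with ht_def
  have hsk_pos : 0 < Real.sqrt k := Real.sqrt_pos.mpr hk
  have hsk : Real.sqrt k ^ 2 = k := Real.sq_sqrt hk.le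
  have hs0 : 0 ≤ s := Real.sqrt_nonneg _
  have ht : Real.sqrt k ≤ t := by
    rw [ht_def]
    have : 0 ≤ γ*(Real.sqrt k)*a/(2*(a^2+k)) := by positivity
    linarith
  have hs2 : s^2 = R := Real.sq_sqrt hR0
  have ht2 : t^2 = k + 2*γ*k*a/(2*(a^2+k)) + γ^2*k*a^2*((2*(a^2+k))⁻¹)^2 := by
    rw [ht_def]
    linear_combination (1 + 2*γ*a/(2*(a^2+k)) + γ^2*a^2*((2*(a^2+k))⁻¹)^2) * hsk
  have hdiff : s^2 - t^2 = -a*(e - γ*a^2/(a^2+k)) + (3/4)*e^2 - γ^2*k*a^2/(4*(a^2+k)^2) := by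
    rw [hs2, ht2, hR_def]
    field_simp
    ring
  have hC2 : |s^2 - t^2| ≤ γ^2 * (2*a^4/k^2 + a^2/(4*k)) := by
    have b1 : |(-a)*(e - γ*a^2/(a^2+k))| ≤ γ^2*a^4/k^2 := by
      rw [abs_mul, abs_neg, abs_of_pos ha]
      calc a * |e - γ*a^2/(a^2+k)| ≤ a * (γ^2*a^3/k^2) :=
            mul_le_mul_of_nonneg_left hδ ha.le
        _ = γ^2*a^4/k^2 := by ring
    have b2 : (3/4)*e^2 ≤ (3/4)*(γ^2*a^4/k^2) := by
      have : e^2 ≤ (γ*a^2/k)^2 := by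
        apply sq_le_sq' _ he2
        nlinarith [he0]
      calc (3/4)*e^2 ≤ (3/4)*((γ*a^2/k)^2) := by linarith
        _ = (3/4)*(γ^2*a^4/k^2) := by ring
    have b3 : γ^2*k*a^2/(4*(a^2+k)^2) ≤ γ^2*a^2/(4*k) := by
      rw [div_le_div_iff₀ (by positivity) (by positivity)]
      have hkk : k^2 ≤ (a^2+k)^2 := pow_le_pow_left₀ hk.le (by nlinarith [sq_nonneg a]) 2
      calc γ^2*k*a^2*(4*k) = (4*γ^2*a^2)*k^2 := by ring
        _ ≤ (4*γ^2*a^2)*(a^2+k)^2 := mul_le_mul_of_nonneg_left hkk (by positivity)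
        _ = γ^2*a^2*(4*(a^2+k)^2) := by ring
    have htri : |s^2 - t^2| ≤ |(-a)*(e - γ*a^2/(a^2+k))| + (3/4)*e^2 + γ^2*k*a^2/(4*(a^2+k)^2) := by
      rw [hdiff]
      have h1 : -a*(e - γ*a^2/(a^2+k)) + (3/4)*e^2 - γ^2*k*a^2/(4*(a^2+k)^2)
          = ((-a)*(e - γ*a^2/(a^2+k)) + (3/4)*e^2) + (-(γ^2*k*a^2/(4*(a^2+k)^2))) := by ring
      rw [h1]
      calc |(-a)*(e - γ*a^2/(a^2+k)) + (3/4)*e^2 + -(γ^2*k*a^2/(4*(a^2+k)^2))|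
          ≤ |(-a)*(e - γ*a^2/(a^2+k)) + (3/4)*e^2| + |(-(γ^2*k*a^2/(4*(a^2+k)^2)))| := abs_add_le _ _
        _ ≤ |(-a)*(e - γ*a^2/(a^2+k))| + |(3/4)*e^2| + |(-(γ^2*k*a^2/(4*(a^2+k)^2)))| := by
            linarith [abs_add_le ((-a)*(e - γ*a^2/(a^2+k))) ((3/4)*e^2)]
        _ = |(-a)*(e - γ*a^2/(a^2+k))| + (3/4)*e^2 + γ^2*k*a^2/(4*(a^2+k)^2) := by
            rw [abs_neg, abs_of_nonneg (by positivity : (0:ℝ) ≤ (3/4)*e^2),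
              abs_of_nonneg (by positivity : (0:ℝ) ≤ γ^2*k*a^2/(4*(a^2+k)^2))]
    calc |s^2 - t^2| ≤ |(-a)*(e - γ*a^2/(a^2+k))| + (3/4)*e^2 + γ^2*k*a^2/(4*(a^2+k)^2) := htri
      _ ≤ γ^2*a^4/k^2 + (3/4)*(γ^2*a^4/k^2) + γ^2*a^2/(4*k) := by linarith
      _ ≤ γ^2 * (2*a^4/k^2 + a^2/(4*k)) := by
          have hpos : (0:ℝ) ≤ γ^2*a^4/k^2 := by positivity
          have hexp : γ^2*(2*a^4/k^2 + a^2/(4*k)) = 2*(γ^2*a^4/k^2) + γ^2*a^2/(4*k) := by ring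
          linarith
  have hsum : Real.sqrt k ≤ s + t := by linarith
  have hst : |s - t| * (s + t) = |s^2 - t^2| := by
    have hsum0 : 0 ≤ s + t := by linarith
    rw [← abs_of_nonneg hsum0, ← abs_mul]
    congr 1; ring
  constructor
  · exact hR
  · have hrw : γ^2 * ((2*a^4/k^2 + a^2/(4*k))/Real.sqrt k)
        = (γ^2*(2*a^4/k^2 + a^2/(4*k)))/Real.sqrt k := by ring
    rw [hrw, le_div_iff₀ hsk_pos]
    calc |s - t| * Real.sqrt k ≤ |s - t| * (s + t) :=
          mul_le_mul_of_nonneg_left hsum (abs_nonneg _)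
      _ = |s^2 - t^2| := hst
      _ ≤ γ^2 * (2*a^4/k^2 + a^2/(4*k)) := hC2

lemma target_eq (k ν γ : ℝ) (hk : 0 < k) (hν : 0 < ν) :
    Complex.I * (Real.sqrt k : ℂ) -
        (γ : ℂ) * (1 - Complex.I * (Real.sqrt k : ℂ) * (ν : ℂ)^2) /
          (2 * (1 + (k:ℂ)*(ν:ℂ)^4))
      = Complex.ofReal (-(γ/(2*(1+k*ν^4))))
        + Complex.I * Complex.ofReal (Real.sqrt k + γ*(Real.sqrt k)*ν^2/(2*(1+k*ν^4))) := by
  have hd : (0:ℝ) < 1 + k*ν^4 := by positivity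
  have h1 : ((1:ℂ) + (k:ℂ)*(ν:ℂ)^4) ≠ 0 := by
    have : ((1:ℂ) + (k:ℂ)*(ν:ℂ)^4) = ((1 + k*ν^4 : ℝ) : ℂ) := by push_cast; ring
    rw [this]
    exact_mod_cast hd.ne'
  push_cast
  field_simp
  ring

lemma ofReal_sub_comb (p q r s : ℝ) :
    (Complex.ofReal p + Complex.I * Complex.ofReal q)
        - (Complex.ofReal r + Complex.I * Complex.ofReal s)
      = Complex.ofReal (p - r) + Complex.I * Complex.ofReal (q - s) := by
  push_cast; ring

lemma abs_ofReal_add_I_mul (p q : ℝ) :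
    ‖Complex.ofReal p + Complex.I * Complex.ofReal q‖ ≤ |p| + |q| := by
  refine le_trans (Complex.norm_le_abs_re_add_abs_im _) ?_
  simp

/-- Asymptotics of the roots of
`p(x) = x³ + ν⁻²x² + (γν⁻² + k)x + kν⁻²` as `γ → 0⁺`: the real root satisfies
`x₁(γ) = -ν⁻² + O(γ)` and the complex conjugate pair satisfies
`x₂(γ) = i√k - γ(1 - i√k ν²)/(2(1+kν⁴)) + O(γ²)`. -/
theorem gle_roots_gamma_to_zero (k ν : ℝ) (hk : 0 < k) (hν : 0 < ν) :
    ∃ (x₁ : ℝ → ℝ) (x₂ : ℝ → ℂ) (γ₀ : ℝ), 0 < γ₀ ∧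
      (∀ γ, 0 < γ → γ < γ₀ →
        x₁ γ ^ 3 + (ν ^ 2)⁻¹ * x₁ γ ^ 2 + (γ * (ν ^ 2)⁻¹ + k) * x₁ γ + k * (ν ^ 2)⁻¹ = 0 ∧
        x₂ γ ^ 3 + ((ν : ℂ) ^ 2)⁻¹ * x₂ γ ^ 2 +
            ((γ : ℂ) * ((ν : ℂ) ^ 2)⁻¹ + (k : ℂ)) * x₂ γ + (k : ℂ) * ((ν : ℂ) ^ 2)⁻¹ = 0 ∧
        (x₂ γ).im ≠ 0 ∧
        (starRingEnd ℂ) (x₂ γ) ^ 3 + ((ν : ℂ) ^ 2)⁻¹ * (starRingEnd ℂ) (x₂ γ) ^ 2 +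
            ((γ : ℂ) * ((ν : ℂ) ^ 2)⁻¹ + (k : ℂ)) * (starRingEnd ℂ) (x₂ γ) +
            (k : ℂ) * ((ν : ℂ) ^ 2)⁻¹ = 0) ∧
      ((fun γ => x₁ γ + (ν ^ 2)⁻¹) =O[nhdsWithin 0 (Set.Ioi 0)] fun γ => γ) ∧
      ((fun γ => x₂ γ -
          (Complex.I * (Real.sqrt k : ℂ) -
            (γ : ℂ) * (1 - Complex.I * (Real.sqrt k : ℂ) * (ν : ℂ) ^ 2) /
              (2 * (1 + (k : ℂ) * (ν : ℂ) ^ 4))))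
        =O[nhdsWithin 0 (Set.Ioi 0)] fun γ => γ ^ 2) := by
  classical
  set a : ℝ := (ν^2)⁻¹ with ha_def
  have ha : 0 < a := by rw [ha_def]; positivity
  have hν0 : ν ≠ 0 := hν.ne'
  have hacast : ((ν:ℂ)^2)⁻¹ = ((a:ℝ):ℂ) := by rw [ha_def]; push_cast; ring
  obtain ⟨X, hX⟩ : ∃ X : ℝ → ℝ, ∀ γ, 0 < γ →
      (X γ ∈ Set.Icc (-a) 0 ∧ (X γ)^3 + a*(X γ)^2 + (γ*a+k)*(X γ) + k*a = 0) := by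
    refine ⟨fun γ => if h : 0 < γ then (exists_root_aux k a γ hk ha h).choose else -a,
      fun γ hγ => ?_⟩
    simp only [dif_pos hγ]
    exact (exists_root_aux k a γ hk ha hγ).choose_spec
  set S : ℝ → ℝ := fun γ => Real.sqrt (k + γ*a - a*(X γ + a) + (3/4)*(X γ + a)^2) with hS_def
  set Z : ℝ → ℂ := fun γ =>
    Complex.ofReal (-(X γ + a)/2) + Complex.I * Complex.ofReal (S γ) with hZ_def
  set γ₀ : ℝ := k^2/(2*a^3) with hγ₀_def
  have hγ₀ : 0 < γ₀ := by rw [hγ₀_def]; positivity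
  have facts : ∀ γ, 0 < γ → γ < γ₀ →
      (0 ≤ X γ + a ∧ X γ + a ≤ γ*a^2/k ∧
        |X γ + a - γ*a^2/(a^2+k)| ≤ γ^2*a^3/k^2) ∧
      (k/2 ≤ k + γ*a - a*(X γ + a) + (3/4)*(X γ + a)^2) ∧
      |S γ - (Real.sqrt k + γ*(Real.sqrt k)*a/(2*(a^2+k)))|
        ≤ γ^2 * ((2*a^4/k^2 + a^2/(4*k))/Real.sqrt k) := by
    intro γ hγ hγlt
    obtain ⟨hmem, hroot⟩ := hX γ hγ
    have hb := root_e_bounds k a γ (X γ) hk ha hγ hmem hroot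
    have hγle : γ ≤ k^2/(2*a^3) := by rw [hγ₀_def] at hγlt; linarith
    have hs := s_bound k a γ (X γ + a) hk ha hγ hb.1 hb.2.1 hb.2.2 hγle
    exact ⟨hb, hs.1, hs.2⟩
  refine ⟨X, Z, γ₀, hγ₀, ?_, ?_, ?_⟩
  · -- root equations
    intro γ hγ hγlt
    obtain ⟨hmem, hroot⟩ := hX γ hγ
    obtain ⟨⟨he0, he2, hδ⟩, hRb, hs⟩ := facts γ hγ hγlt
    have hR0 : (0:ℝ) ≤ k + γ*a - a*(X γ + a) + (3/4)*(X γ + a)^2 := by linarith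
    have hs2 : (S γ)^2 = k + γ*a - a*(X γ + a) + (3/4)*(X γ + a)^2 := by
      rw [hS_def]; exact Real.sq_sqrt hR0
    have hs2c : ((S γ : ℝ) : ℂ)^2
        = (k:ℂ) + (γ:ℂ)*(a:ℂ) - (a:ℂ)*((X γ : ℂ) + (a:ℂ))
          + (3/4)*((X γ : ℂ) + (a:ℂ))^2 := by
      have := congrArg (Complex.ofReal) hs2
      push_cast at this
      convert this using 1 <;> push_cast <;> ring
    have hrc : ((X γ : ℂ))^3 + (a:ℂ)*(X γ : ℂ)^2 + ((γ:ℂ)*(a:ℂ)+(k:ℂ))*(X γ:ℂ)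
        + (k:ℂ)*(a:ℂ) = 0 := by exact_mod_cast congrArg (Complex.ofReal) hroot
    have hI : (Complex.I)^2 = -1 := Complex.I_sq
    have hzval : Z γ = Complex.ofReal (-(X γ + a)/2) + Complex.I * Complex.ofReal (S γ) := by
      rw [hZ_def]
    have hquad : (Z γ)^2 + ((X γ:ℂ) + (a:ℂ))*(Z γ)
        + ((γ:ℂ)*(a:ℂ) + (k:ℂ) + (X γ:ℂ)*((X γ:ℂ) + (a:ℂ))) = 0 := by
      rw [hzval]
      push_cast
      linear_combination ((S γ : ℂ))^2 * hI - hs2c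
    have hcplx : Z γ ^ 3 + ((ν : ℂ)^2)⁻¹ * Z γ ^ 2
        + ((γ:ℂ) * ((ν:ℂ)^2)⁻¹ + (k:ℂ)) * Z γ + (k:ℂ) * ((ν:ℂ)^2)⁻¹ = 0 := by
      rw [hacast]
      linear_combination (Z γ - (X γ : ℂ)) * hquad + hrc
    have hSpos : 0 < S γ := by
      rw [hS_def]
      exact Real.sqrt_pos.mpr (by linarith)
    have him : (Z γ).im = S γ := by rw [hzval]; simp
    have hconjval : (starRingEnd ℂ) (Z γ)
        = Complex.ofReal (-(X γ + a)/2) - Complex.I * Complex.ofReal (S γ) := by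
      rw [hzval, map_add, map_mul, Complex.conj_ofReal, Complex.conj_ofReal, Complex.conj_I]
      ring
    have hquad' : ((starRingEnd ℂ) (Z γ))^2 + ((X γ:ℂ) + (a:ℂ))*((starRingEnd ℂ) (Z γ))
        + ((γ:ℂ)*(a:ℂ) + (k:ℂ) + (X γ:ℂ)*((X γ:ℂ) + (a:ℂ))) = 0 := by
      rw [hconjval]
      push_cast
      linear_combination ((S γ : ℂ))^2 * hI - hs2c
    refine ⟨by linear_combination hroot, hcplx, by rw [him]; exact hSpos.ne', ?_⟩
    rw [hacast]
    linear_combination ((starRingEnd ℂ) (Z γ) - (X γ : ℂ)) * hquad' + hrc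
  · -- x₁ big-O
    rw [Asymptotics.isBigO_iff]
    refine ⟨a^2/k, ?_⟩
    filter_upwards [Ioo_mem_nhdsGT_of_mem (Set.left_mem_Ico.mpr hγ₀)] with γ hγm
    obtain ⟨⟨he0, he2, _⟩, _, _⟩ := facts γ hγm.1 hγm.2
    rw [Real.norm_eq_abs, Real.norm_eq_abs, abs_of_nonneg he0, abs_of_pos hγm.1]
    calc X γ + a ≤ γ*a^2/k := he2
      _ = a^2/k*γ := by ring
  · -- x₂ big-O
    rw [Asymptotics.isBigO_iff]
    refine ⟨a^3/(2*k^2) + (2*a^4/k^2 + a^2/(4*k))/Real.sqrt k, ?_⟩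
    filter_upwards [Ioo_mem_nhdsGT_of_mem (Set.left_mem_Ico.mpr hγ₀)] with γ hγm
    obtain ⟨⟨he0, he2, hδ⟩, hRb, hs⟩ := facts γ hγm.1 hγm.2
    rw [target_eq k ν γ hk hν]
    have id1 : γ/(2*(1+k*ν^4)) = γ*a^2/(2*(a^2+k)) := by
      rw [ha_def, div_eq_div_iff (by positivity) (by positivity)]
      field_simp
    have id2 : γ*(Real.sqrt k)*ν^2/(2*(1+k*ν^4)) = γ*(Real.sqrt k)*a/(2*(a^2+k)) := by
      rw [ha_def, div_eq_div_iff (by positivity) (by positivity)]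
      field_simp
    have hzdiff : Z γ - (Complex.ofReal (-(γ/(2*(1+k*ν^4))))
          + Complex.I * Complex.ofReal (Real.sqrt k + γ*(Real.sqrt k)*ν^2/(2*(1+k*ν^4))))
        = Complex.ofReal (-(X γ + a)/2 + γ*a^2/(2*(a^2+k)))
          + Complex.I * Complex.ofReal
            (S γ - (Real.sqrt k + γ*(Real.sqrt k)*a/(2*(a^2+k)))) := by
      have r1 : -(X γ + a)/2 - (-(γ/(2*(1+k*ν^4))))
          = -(X γ + a)/2 + γ*a^2/(2*(a^2+k)) := by rw [id1]; ring
      have r2 : S γ - (Real.sqrt k + γ*(Real.sqrt k)*ν^2/(2*(1+k*ν^4)))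
          = S γ - (Real.sqrt k + γ*(Real.sqrt k)*a/(2*(a^2+k))) := by rw [id2]
      rw [hZ_def]
      simp only
      rw [ofReal_sub_comb, r1, r2]
    rw [hzdiff]
    have habs : ‖Complex.ofReal (-(X γ + a)/2 + γ*a^2/(2*(a^2+k)))
          + Complex.I * Complex.ofReal
            (S γ - (Real.sqrt k + γ*(Real.sqrt k)*a/(2*(a^2+k))))‖
        ≤ |(-(X γ + a)/2 + γ*a^2/(2*(a^2+k)))|
          + |S γ - (Real.sqrt k + γ*(Real.sqrt k)*a/(2*(a^2+k)))| := by
      exact abs_ofReal_add_I_mul _ _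
    have hre : |(-(X γ + a)/2 + γ*a^2/(2*(a^2+k)))| ≤ γ^2*a^3/(2*k^2) := by
      have hD : (0:ℝ) < a^2+k := by positivity
      have heq : -(X γ + a)/2 + γ*a^2/(2*(a^2+k)) = -((X γ + a) - γ*a^2/(a^2+k))/2 := by
        field_simp
        ring
      rw [heq, abs_div, abs_neg]
      rw [abs_of_pos (by norm_num : (0:ℝ) < (2:ℝ))]
      have h2k : γ^2*a^3/(2*k^2) = (γ^2*a^3/k^2)/2 := by
        field_simp
      rw [h2k]
      linarith
    have hnγ : ‖γ^2‖ = γ^2 := by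
      rw [Real.norm_eq_abs, abs_of_pos (pow_pos hγm.1 2)]
    rw [hnγ]
    calc ‖_‖ ≤ _ := habs
      _ ≤ γ^2*a^3/(2*k^2) + γ^2 * ((2*a^4/k^2 + a^2/(4*k))/Real.sqrt k) := by linarith
      _ = (a^3/(2*k^2) + (2*a^4/k^2 + a^2/(4*k))/Real.sqrt k) * γ^2 := by ring
end
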